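/- Interlacing of zeros: let u be a solution of (⌊u''⌉^{p-1})'' = λ⌊u⌉^{q-1} on [0, t₀] with Navier boundary conditions and u'(0) ≠ 0. Then u vanishes exactly n times in the open interval (0, t₀) if and only if u'' vanishes exactly n times in (0, t₀). -/

import Mathlib

/-- Signed power ⌊x⌉^r = |x|^r · sgn x. -/
noncomputable def spow (r x : ℝ) : ℝ := |x| ^ r * Real.sign x

lemma rolle_finset (g : ℝ → ℝ) (hg : Differentiable ℝ g) (S : Finset ℝ)
    (hS : ∀ x ∈ S, g x = 0) :
    ∃ T : Finset ℝ, S.card ≤ T.card + 1 ∧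
      ∀ x ∈ T, deriv g x = 0 ∧ ∃ y ∈ S, ∃ z ∈ S, y < x ∧ x < z := by
  rcases Nat.eq_zero_or_pos S.card with h0 | hpos
  · exact ⟨∅, by omega, by simp⟩
  obtain ⟨k, hk⟩ : ∃ k, S.card = k + 1 := ⟨S.card - 1, by omega⟩
  set e : Fin (k + 1) → ℝ := fun i => (S.orderIsoOfFin hk i : ℝ) with he
  have he_mem : ∀ i, e i ∈ S := fun i => (S.orderIsoOfFin hk i).2
  have he_mono : StrictMono e := fun i j hij => by
    exact_mod_cast (S.orderIsoOfFin hk).strictMono hij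
  have hroll : ∀ i : Fin k, ∃ c ∈ Set.Ioo (e i.castSucc) (e i.succ), deriv g c = 0 := by
    intro i
    apply exists_deriv_eq_zero (he_mono (Fin.castSucc_lt_succ : i.castSucc < i.succ)) hg.continuous.continuousOn
    rw [hS _ (he_mem _), hS _ (he_mem _)]
  choose c hc hc0 using hroll
  have hc_mono : StrictMono c := by
    intro i j hij
    have h1 : (c i) < e i.succ := (hc i).2
    have h2 : e j.castSucc < c j := (hc j).1
    have h3 : e i.succ ≤ e j.castSucc := he_mono.monotone (by
      rw [Fin.le_def]; rw [Fin.lt_def] at hij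
      simp only [Fin.val_succ, Fin.coe_castSucc]; omega)
    linarith
  refine ⟨Finset.image c Finset.univ, ?_, ?_⟩
  · rw [Finset.card_image_of_injective _ hc_mono.injective, Finset.card_univ]
    simp [hk]
  · intro x hx
    obtain ⟨i, _, rfl⟩ := Finset.mem_image.mp hx
    exact ⟨hc0 i, e i.castSucc, he_mem _, e i.succ, he_mem _, (hc i).1, (hc i).2⟩

lemma enat_le_of_nat {x y : ℕ∞} (h : ∀ m : ℕ, (m : ℕ∞) ≤ x → (m : ℕ∞) ≤ y) : x ≤ y := by
  cases y with
  | top => exact le_top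
  | coe k =>
    by_contra hxy
    push_neg at hxy
    have h1 : ((k + 1 : ℕ) : ℕ∞) ≤ x := by
      exact_mod_cast Order.add_one_le_of_lt hxy
    have := h (k + 1) h1
    exact absurd (Nat.cast_le.mp this) (by omega)

lemma zeros_le (f : ℝ → ℝ) (h1 : Differentiable ℝ f) (h2 : Differentiable ℝ (deriv f))
    (a b : ℝ) (hab : a < b) (ha : f a = 0) (hb : f b = 0) :
    {t | t ∈ Set.Ioo a b ∧ f t = 0}.encard ≤
      {t | t ∈ Set.Ioo a b ∧ deriv (deriv f) t = 0}.encard := by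
  apply enat_le_of_nat
  intro m hm
  obtain ⟨s, hs_sub, hs_enc⟩ := Set.exists_subset_encard_eq hm
  have hs_fin : s.Finite := Set.finite_of_encard_eq_coe hs_enc
  set S₀ : Finset ℝ := hs_fin.toFinset with hS₀
  have hS₀card : S₀.card = m := by
    rwa [hs_fin.encard_eq_coe_toFinset_card, Nat.cast_inj] at hs_enc
  have hS₀mem : ∀ x ∈ S₀, x ∈ Set.Ioo a b ∧ f x = 0 := fun x hx =>
    hs_sub (hs_fin.mem_toFinset.mp hx)
  set S : Finset ℝ := insert a (insert b S₀) with hS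
  have haS : a ∉ insert b S₀ := by
    simp only [Finset.mem_insert]
    push_neg
    exact ⟨hab.ne, fun h => (hS₀mem a h).1.1.false⟩
  have hbS : b ∉ S₀ := fun h => (hS₀mem b h).1.2.false
  have hScard : S.card = m + 2 := by
    rw [hS, Finset.card_insert_of_notMem haS, Finset.card_insert_of_notMem hbS, hS₀card]
  have hSzero : ∀ x ∈ S, f x = 0 := by
    intro x hx
    rcases Finset.mem_insert.mp hx with rfl | hx
    · exact ha
    rcases Finset.mem_insert.mp hx with rfl | hx
    · exact hb
    · exact (hS₀mem x hx).2
  have hSIcc : ∀ x ∈ S, x ∈ Set.Icc a b := by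
    intro x hx
    rcases Finset.mem_insert.mp hx with rfl | hx
    · exact ⟨le_rfl, hab.le⟩
    rcases Finset.mem_insert.mp hx with rfl | hx
    · exact ⟨hab.le, le_rfl⟩
    · exact ⟨(hS₀mem x hx).1.1.le, (hS₀mem x hx).1.2.le⟩
  obtain ⟨T₁, hT₁card, hT₁⟩ := rolle_finset f h1 S hSzero
  have hT₁Ioo : ∀ x ∈ T₁, x ∈ Set.Ioo a b := by
    intro x hx
    obtain ⟨_, y, hy, z, hz, hyx, hxz⟩ := hT₁ x hx
    exact ⟨lt_of_le_of_lt (hSIcc y hy).1 hyx, lt_of_lt_of_le hxz (hSIcc z hz).2⟩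
  obtain ⟨T₂, hT₂card, hT₂⟩ := rolle_finset (deriv f) h2 T₁ (fun x hx => (hT₁ x hx).1)
  have hT₂sub : (T₂ : Set ℝ) ⊆ {t | t ∈ Set.Ioo a b ∧ deriv (deriv f) t = 0} := by
    intro x hx
    obtain ⟨hx0, y, hy, z, hz, hyx, hxz⟩ := hT₂ x hx
    exact ⟨⟨(hT₁Ioo y hy).1.trans hyx, hxz.trans (hT₁Ioo z hz).2⟩, hx0⟩
  calc (m : ℕ∞) ≤ (T₂.card : ℕ∞) := by exact_mod_cast (by omega : m ≤ T₂.card)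
    _ = (T₂ : Set ℝ).encard := (Set.encard_coe_eq_coe_finsetCard T₂).symm
    _ ≤ _ := Set.encard_mono hT₂sub

lemma spow_eq_zero_iff (r x : ℝ) (hr : 0 < r) : spow r x = 0 ↔ x = 0 := by
  unfold spow
  constructor
  · intro h
    rcases mul_eq_zero.mp h with h | h
    · by_contra hx
      exact absurd h (ne_of_gt (Real.rpow_pos_of_pos (abs_pos.mpr hx) r))
    · exact Real.sign_eq_zero_iff.mp h
  · rintro rfl; simp

lemma diff2 (f : ℝ → ℝ) (h : ContDiff ℝ 2 f) :
    Differentiable ℝ f ∧ Differentiable ℝ (deriv f) := by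
  have h2 : ContDiff ℝ ((1 : WithTop ℕ∞) + 1) f := by norm_num at h ⊢; exact h
  rw [contDiff_succ_iff_deriv] at h2
  exact ⟨h2.1, h2.2.2.differentiable one_ne_zero⟩


/-- u solves (⌊u''⌉^{p-1})'' = λ⌊u⌉^{q-1} on [0,t₀] with Navier boundary conditions. -/
def NavierSol (p q lam t₀ : ℝ) (u : ℝ → ℝ) : Prop :=
  ContDiff ℝ 2 u ∧ ContDiff ℝ 2 (fun t => spow (p - 1) (deriv (deriv u) t)) ∧
  (∀ t ∈ Set.Icc (0:ℝ) t₀,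
    deriv (deriv fun s => spow (p - 1) (deriv (deriv u) s)) t = lam * spow (q - 1) (u t)) ∧
  u 0 = 0 ∧ u t₀ = 0 ∧ deriv (deriv u) 0 = 0 ∧ deriv (deriv u) t₀ = 0

/-- interlacing of zeros.  For a Navier solution with u'(0) ≠ 0,
u vanishes exactly n times in (0,t₀) iff u'' vanishes exactly n times in (0,t₀). -/
theorem stmt10 (p q lam t₀ : ℝ) (hp : 1 < p) (hq : 1 < q) (ht₀ : 0 < t₀) (hlam : 0 < lam)
    (u : ℝ → ℝ) (hu : NavierSol p q lam t₀ u) (hd : deriv u 0 ≠ 0) (n : ℕ) :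
    {t | t ∈ Set.Ioo (0:ℝ) t₀ ∧ u t = 0}.encard = n ↔
      {t | t ∈ Set.Ioo (0:ℝ) t₀ ∧ deriv (deriv u) t = 0}.encard = n := by
  obtain ⟨hu2, hv2, hode, hu0, hut, hw0, hwt⟩ := hu
  set v : ℝ → ℝ := fun t => spow (p - 1) (deriv (deriv u) t) with hv
  have hp1 : (0:ℝ) < p - 1 := by linarith
  have hq1 : (0:ℝ) < q - 1 := by linarith
  have hBv : {t | t ∈ Set.Ioo (0:ℝ) t₀ ∧ deriv (deriv u) t = 0}
      = {t | t ∈ Set.Ioo (0:ℝ) t₀ ∧ v t = 0} := by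
    ext t
    exact and_congr_right fun _ => (spow_eq_zero_iff _ _ hp1).symm
  have hAv : {t | t ∈ Set.Ioo (0:ℝ) t₀ ∧ u t = 0}
      = {t | t ∈ Set.Ioo (0:ℝ) t₀ ∧ deriv (deriv v) t = 0} := by
    ext t
    refine and_congr_right fun ht => ?_
    rw [hv, hode t (Set.mem_Icc_of_Ioo ht), mul_eq_zero]
    constructor
    · intro h; right; exact (spow_eq_zero_iff _ _ hq1).mpr h
    · rintro (h | h)
      · exact absurd h hlam.ne'
      · exact (spow_eq_zero_iff _ _ hq1).mp h
  have hdu := diff2 u hu2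
  have hdv := diff2 _ hv2
  have h1 : {t | t ∈ Set.Ioo (0:ℝ) t₀ ∧ u t = 0}.encard ≤
      {t | t ∈ Set.Ioo (0:ℝ) t₀ ∧ deriv (deriv u) t = 0}.encard :=
    zeros_le u hdu.1 hdu.2 0 t₀ ht₀ hu0 hut
  have hv0 : v 0 = 0 := by rw [hv]; simp only [hw0]; simp [spow]
  have hvt : v t₀ = 0 := by rw [hv]; simp only [hwt]; simp [spow]
  have h2 : {t | t ∈ Set.Ioo (0:ℝ) t₀ ∧ deriv (deriv u) t = 0}.encard ≤
      {t | t ∈ Set.Ioo (0:ℝ) t₀ ∧ u t = 0}.encard := by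
    rw [hBv, hAv]
    exact zeros_le v hdv.1 hdv.2 0 t₀ ht₀ hv0 hvt
  rw [le_antisymm h1 h2]
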